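/- Let r, s ∈ (0,∞) with s < r and let X be an ℝ^d-valued random variable with distribution P = f·λ_d such that E|X|^{r+η} < ∞ for some η > 0. Let θ > 0, μ ∈ ℝ^d, assume (θ,μ) is P-admissible, and let (α_n)_{n≥1} be an asymptotically L^r(P)-optimal sequence of quantizers. If ∫_{{f>0}} f_{θ,μ}^{r/(r−s)} · f^{−s/(r−s)} dλ_d < ∞, then (α_n^{θ,μ})_{n≥1} is L^s(P)-rate-optimal, and moreover limsup_{n→∞} n^{s/d} ∫ d(x, α_n^{θ,μ})^s dP(x) ≤ θ^{s+d} · Q_r(P)^{s/r} · (∫_{{f>0}} f_{θ,μ}^{r/(r−s)} f^{−s/(r−s)} dλ_d)^{1−s/r}. -/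

import Mathlib

open MeasureTheory ENNReal Filter Set Metric Topology
open scoped Classical

noncomputable section

/-- Distance from a point `x` to a finite codebook `α`. -/
def qdist {d : ℕ} (x : EuclideanSpace ℝ (Fin d)) (α : Finset (EuclideanSpace ℝ (Fin d))) : ℝ :=
  Metric.infDist x (α : Set (EuclideanSpace ℝ (Fin d)))

/-- The `r`-th power `L^r` quantization error `∫ d(x,α)^r dP` of a codebook `α`. -/
def qerr {d : ℕ} (P : Measure (EuclideanSpace ℝ (Fin d))) (r : ℝ)
    (α : Finset (EuclideanSpace ℝ (Fin d))) : ℝ≥0∞ :=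
  ∫⁻ x, ENNReal.ofReal (qdist x α) ^ r ∂P

/-- The optimal `n`-level `L^r` quantization error `e_{n,r}(P)`. -/
def enr {d : ℕ} (P : Measure (EuclideanSpace ℝ (Fin d))) (r : ℝ) (n : ℕ) : ℝ≥0∞ :=
  ⨅ (α : Finset (EuclideanSpace ℝ (Fin d))) (_ : α.Nonempty) (_ : α.card ≤ n),
    qerr P r α ^ (1 / r)

/-- The uniform distribution on the unit cube `[0,1]^d`. -/
def unifCube (d : ℕ) : Measure (EuclideanSpace ℝ (Fin d)) :=
  volume.restrict {x | ∀ i, x i ∈ Icc (0 : ℝ) 1}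

/-- The constant `J_{r,d} = inf_{n ≥ 1} n^{r/d} e_{n,r}(U([0,1]^d))^r`. -/
def Jrd (r : ℝ) (d : ℕ) : ℝ≥0∞ :=
  ⨅ (n : ℕ) (_ : 1 ≤ n), (n : ℝ≥0∞) ^ (r / (d : ℝ)) * enr (unifCube d) r n ^ r

/-- Zador's constant `Q_r(P)` for a measure whose a.c. part has density `f`. -/
def Qr {d : ℕ} (f : EuclideanSpace ℝ (Fin d) → ℝ) (r : ℝ) : ℝ≥0∞ :=
  Jrd r d * (∫⁻ x, ENNReal.ofReal (f x) ^ ((d : ℝ) / ((d : ℝ) + r))) ^ (((d : ℝ) + r) / (d : ℝ))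

/-- The dilated/contracted codebook `α^{θ,μ} = μ + θ(α - μ)`. -/
def dilate {d : ℕ} (α : Finset (EuclideanSpace ℝ (Fin d))) (θ : ℝ)
    (μ : EuclideanSpace ℝ (Fin d)) : Finset (EuclideanSpace ℝ (Fin d)) :=
  α.image fun a => μ + θ • (a - μ)

/-- `f_{θ,μ}(x) = f(μ + θ(x-μ))`. -/
def fdil {d : ℕ} (f : EuclideanSpace ℝ (Fin d) → ℝ) (θ : ℝ)
    (μ x : EuclideanSpace ℝ (Fin d)) : ℝ :=
  f (μ + θ • (x - μ))

/-- The image measure `P_{θ,μ}` of `P` under `x ↦ (x-μ)/θ + μ`. -/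
def Pdil {d : ℕ} (P : Measure (EuclideanSpace ℝ (Fin d))) (θ : ℝ)
    (μ : EuclideanSpace ℝ (Fin d)) : Measure (EuclideanSpace ℝ (Fin d)) :=
  Measure.map (fun x => μ + θ⁻¹ • (x - μ)) P

/-- `(θ,μ)` is `P`-admissible for `P = f·λ_d`:
`{f>0} ⊆ μ(1-θ) + θ{f>0}` up to a `λ_d`-null set.  (Note that
`x ∈ μ(1-θ) + θ{f>0}` iff `f((x-μ)/θ + μ) > 0`.) -/
def Admissible {d : ℕ} (f : EuclideanSpace ℝ (Fin d) → ℝ) (θ : ℝ)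
    (μ : EuclideanSpace ℝ (Fin d)) : Prop :=
  ∀ᵐ x ∂(volume : Measure (EuclideanSpace ℝ (Fin d))),
    0 < f x → 0 < f (μ + θ⁻¹ • (x - μ))

/-- The maximal function `ψ_b` attached to `P` and the sequence of codebooks `α`. -/
def maxFun {d : ℕ} (P : Measure (EuclideanSpace ℝ (Fin d)))
    (α : ℕ → Finset (EuclideanSpace ℝ (Fin d))) (b : ℝ)
    (x : EuclideanSpace ℝ (Fin d)) : ℝ≥0∞ :=
  ⨆ (n : ℕ) (_ : 1 ≤ n),
    volume (Metric.ball x (b * qdist x (α n))) / P (Metric.ball x (b * qdist x (α n)))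

/-- An `L^r(P)`-optimal sequence of `n`-quantizers. -/
def OptimalSeq {d : ℕ} (P : Measure (EuclideanSpace ℝ (Fin d))) (r : ℝ)
    (α : ℕ → Finset (EuclideanSpace ℝ (Fin d))) : Prop :=
  ∀ n, 1 ≤ n → (α n).Nonempty ∧ (α n).card ≤ n ∧ qerr P r (α n) = enr P r n ^ r

/-- An asymptotically `L^r(P)`-optimal sequence of quantizers,
for `P` whose a.c. part has density `f`. -/
def AsympOptimalSeq {d : ℕ} (P : Measure (EuclideanSpace ℝ (Fin d)))
    (f : EuclideanSpace ℝ (Fin d) → ℝ) (r : ℝ)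
    (α : ℕ → Finset (EuclideanSpace ℝ (Fin d))) : Prop :=
  (∀ n, 1 ≤ n → (α n).Nonempty ∧ (α n).card ≤ n) ∧
  Tendsto (fun n : ℕ => (n : ℝ≥0∞) ^ (r / (d : ℝ)) * qerr P r (α n)) atTop (𝓝 (Qr f r))

/-- `L^s(P)`-rate-optimality of a sequence of codebooks. -/
def RateOptimal {d : ℕ} (P : Measure (EuclideanSpace ℝ (Fin d))) (s : ℝ)
    (β : ℕ → Finset (EuclideanSpace ℝ (Fin d))) : Prop :=
  limsup (fun n : ℕ => (n : ℝ≥0∞) ^ (s / (d : ℝ)) * qerr P s (β n)) atTop < ⊤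

/-- The support of a measure. -/
def msupp {d : ℕ} (P : Measure (EuclideanSpace ℝ (Fin d))) : Set (EuclideanSpace ℝ (Fin d)) :=
  {x | ∀ ε > 0, 0 < P (Metric.ball x ε)}

/-- Hypothesis (H1): for every `M > 0`,
`sup { f(μ+θ(z-μ))/f(z) : z ∈ B(0,M), f(z) > 0 } < ∞`. -/
def H1 {d : ℕ} (f : EuclideanSpace ℝ (Fin d) → ℝ) (θ : ℝ)
    (μ : EuclideanSpace ℝ (Fin d)) : Prop :=
  ∀ M > (0 : ℝ), ∃ C : ℝ, ∀ z ∈ Metric.ball (0 : EuclideanSpace ℝ (Fin d)) M,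
    0 < f z → f (μ + θ • (z - μ)) / f z ≤ C

/-- Hypothesis (H2). -/
def H2 {d : ℕ} (P : Measure (EuclideanSpace ℝ (Fin d))) (θ : ℝ)
    (μ : EuclideanSpace ℝ (Fin d)) (s r : ℝ) : Prop :=
  ∃ b ∈ Ioo (0 : ℝ) (1 / 2), ∃ M > (0 : ℝ),
    (∫⁻ x in {x : EuclideanSpace ℝ (Fin d) | M < ‖x‖},
      (⨆ t ∈ Ioc (0 : ℝ) (2 * b * ‖x‖),
        volume (Metric.ball x t) / P (Metric.ball x t)) ^ (s / ((d : ℝ) + r))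
      ∂(Pdil P θ μ)) < ⊤

/-- Hypothesis (H3): `λ_d(· ∩ supp P) ≪ P` and `supp P` is a finite union of
closed convex sets. -/
def H3 {d : ℕ} (P : Measure (EuclideanSpace ℝ (Fin d))) : Prop :=
  volume.restrict (msupp P) ≪ P ∧
  ∃ (k : ℕ) (C : Fin k → Set (EuclideanSpace ℝ (Fin d))),
    (∀ i, IsClosed (C i) ∧ Convex ℝ (C i)) ∧ msupp P = ⋃ i, C i

section Aux

variable {d : ℕ} {θ : ℝ} {μ : EuclideanSpace ℝ (Fin d)}

lemma meas_dilmap (θ : ℝ) (μ : EuclideanSpace ℝ (Fin d)) :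
    Measurable (fun x : EuclideanSpace ℝ (Fin d) => μ + θ • (x - μ)) :=
  measurable_const.add ((measurable_id.sub measurable_const).const_smul θ)

lemma map_dilate (hθ : θ ≠ 0) :
    Measure.map (fun x : EuclideanSpace ℝ (Fin d) => μ + θ • (x - μ))
      (volume : Measure (EuclideanSpace ℝ (Fin d)))
      = ENNReal.ofReal |(θ ^ d : ℝ)|⁻¹ • volume := by
  have hg : Measurable (fun y : EuclideanSpace ℝ (Fin d) => μ + y) :=
    measurable_const.add measurable_id
  have hs : Measurable (fun y : EuclideanSpace ℝ (Fin d) => θ • y) :=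
    measurable_id.const_smul θ
  have ht : Measurable (fun x : EuclideanSpace ℝ (Fin d) => x - μ) :=
    measurable_id.sub measurable_const
  have h1 : (fun x : EuclideanSpace ℝ (Fin d) => μ + θ • (x - μ))
      = ((fun y => μ + y) ∘ (fun y : EuclideanSpace ℝ (Fin d) => θ • y)) ∘ (fun x => x - μ) := by
    funext x; simp [Function.comp]
  rw [h1]
  calc Measure.map (((fun y => μ + y) ∘ (fun y : EuclideanSpace ℝ (Fin d) => θ • y))
        ∘ (fun x => x - μ)) volume
      = Measure.map ((fun y => μ + y) ∘ (fun y : EuclideanSpace ℝ (Fin d) => θ • y))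
          (Measure.map (fun x => x - μ) volume) := (Measure.map_map (hg.comp hs) ht).symm
    _ = Measure.map ((fun y => μ + y) ∘ (fun y : EuclideanSpace ℝ (Fin d) => θ • y)) volume := by
        rw [(measurePreserving_sub_right volume μ).map_eq]
    _ = Measure.map (fun y => μ + y)
          (Measure.map (fun y : EuclideanSpace ℝ (Fin d) => θ • y) volume) :=
        (Measure.map_map hg hs).symm
    _ = ENNReal.ofReal |(θ ^ d : ℝ)|⁻¹ • volume := by
        rw [show (fun y : EuclideanSpace ℝ (Fin d) => θ • y) = (θ • ·) from rfl,
          Measure.map_addHaar_smul volume hθ, Measure.map_smul,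
          show (fun y : EuclideanSpace ℝ (Fin d) => μ + y) = (μ + ·) from rfl,
          (measurePreserving_add_left volume μ).map_eq]
        congr 2
        simp [finrank_euclideanSpace_fin, abs_inv, abs_pow]

lemma lintegral_comp_dilate (hθ : 0 < θ) (h : EuclideanSpace ℝ (Fin d) → ℝ≥0∞)
    (hm : Measurable h) :
    ∫⁻ x, h (μ + θ • (x - μ)) = ENNReal.ofReal (θ ^ d)⁻¹ * ∫⁻ x, h x := by
  rw [← lintegral_map hm (meas_dilmap θ μ), map_dilate hθ.ne', lintegral_smul_measure,
    abs_of_pos (by positivity), smul_eq_mul]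

lemma dist_dilate (hθ : 0 < θ) (x a : EuclideanSpace ℝ (Fin d)) :
    dist x (μ + θ • (a - μ)) = θ * dist (μ + θ⁻¹ • (x - μ)) a := by
  rw [dist_eq_norm, dist_eq_norm, ← norm_smul_of_nonneg hθ.le]
  congr 1
  match_scalars <;> field_simp <;> ring

lemma qdist_dilate (hθ : 0 < θ) (α : Finset (EuclideanSpace ℝ (Fin d)))
    (hne : α.Nonempty) (x : EuclideanSpace ℝ (Fin d)) :
    qdist x (dilate α θ μ) = θ * qdist (μ + θ⁻¹ • (x - μ)) α := by
  set T := μ + θ⁻¹ • (x - μ)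
  have hc : IsCompact (α : Set (EuclideanSpace ℝ (Fin d))) := α.finite_toSet.isCompact
  have hcs : (α : Set (EuclideanSpace ℝ (Fin d))).Nonempty := by exact_mod_cast hne
  have hc2 : IsCompact ((dilate α θ μ : Finset _) : Set (EuclideanSpace ℝ (Fin d))) :=
    (dilate α θ μ).finite_toSet.isCompact
  have hcs2 : ((dilate α θ μ : Finset _) : Set (EuclideanSpace ℝ (Fin d))).Nonempty := by
    exact_mod_cast hne.image _
  apply le_antisymm
  · obtain ⟨a, ha, hda⟩ := hc.exists_infDist_eq_dist hcs T
    have hmem : μ + θ • (a - μ) ∈ (dilate α θ μ : Finset _) := by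
      simp only [dilate, Finset.mem_image]; exact ⟨a, ha, rfl⟩
    calc qdist x (dilate α θ μ) ≤ dist x (μ + θ • (a - μ)) :=
          infDist_le_dist_of_mem (by exact_mod_cast hmem)
      _ = θ * dist T a := dist_dilate hθ x a
      _ = θ * qdist T α := by unfold qdist; rw [hda]
  · obtain ⟨b, hb, hdb⟩ := hc2.exists_infDist_eq_dist hcs2 x
    obtain ⟨a, ha, rfl⟩ := Finset.mem_image.1 (show b ∈ Finset.image _ α from by exact_mod_cast hb)
    calc θ * qdist T α ≤ θ * dist T a :=
          mul_le_mul_of_nonneg_left (infDist_le_dist_of_mem (by exact_mod_cast ha)) hθ.le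
      _ = dist x (μ + θ • (a - μ)) := (dist_dilate hθ x a).symm
      _ = qdist x (dilate α θ μ) := hdb.symm

lemma qdist_measurable (α : Finset (EuclideanSpace ℝ (Fin d))) :
    Measurable fun x => qdist x α := (continuous_infDist_pt _).measurable

lemma meas_rpow {h : EuclideanSpace ℝ (Fin d) → ℝ≥0∞} (hm : Measurable h) (c : ℝ) :
    Measurable fun x => h x ^ c :=
  ENNReal.continuous_rpow_const.measurable.comp hm

/-- The key Hölder estimate. -/
lemma key_bound (r s : ℝ) (hr : 0 < r) (hs : 0 < s) (hsr : s < r)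
    (f : EuclideanSpace ℝ (Fin d) → ℝ) (hf0 : ∀ x, 0 ≤ f x) (hfm : Measurable f)
    (hθ : 0 < θ)
    (hadm' : ∀ᵐ y ∂(volume : Measure (EuclideanSpace ℝ (Fin d))),
      0 < f (μ + θ • (y - μ)) → 0 < f y)
    (α : Finset (EuclideanSpace ℝ (Fin d))) (hne : α.Nonempty) :
    qerr (volume.withDensity fun x => ENNReal.ofReal (f x)) s (dilate α θ μ) ≤
      ENNReal.ofReal θ ^ (s + d : ℝ) *
        (qerr (volume.withDensity fun x => ENNReal.ofReal (f x)) r α) ^ (s / r) *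
        (∫⁻ x in {x | 0 < f x},
          ENNReal.ofReal (fdil f θ μ x) ^ (r / (r - s)) *
            ENNReal.ofReal (f x) ^ (-(s / (r - s)))) ^ (1 - s / r) := by
  have hr0 : r ≠ 0 := hr.ne'
  have hs0 : s ≠ 0 := hs.ne'
  have hrs0 : r - s ≠ 0 := sub_ne_zero.2 hsr.ne'
  set P := volume.withDensity fun x => ENNReal.ofReal (f x) with hPdef
  set g : EuclideanSpace ℝ (Fin d) → ℝ≥0∞ := fun y => ENNReal.ofReal (qdist y α) with hg
  set w : EuclideanSpace ℝ (Fin d) → ℝ≥0∞ := fun y => ENNReal.ofReal (f y) with hw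
  set wd : EuclideanSpace ℝ (Fin d) → ℝ≥0∞ := fun y => ENNReal.ofReal (fdil f θ μ y) with hwd
  have hgm : Measurable g := (qdist_measurable α).ennreal_ofReal
  have hwm : Measurable w := hfm.ennreal_ofReal
  have hwdm : Measurable wd := (hfm.comp (meas_dilmap θ μ)).ennreal_ofReal
  have hU : MeasurableSet {x : EuclideanSpace ℝ (Fin d) | 0 < f x} :=
    measurableSet_lt measurable_const hfm
  have hST : ∀ x : EuclideanSpace ℝ (Fin d), μ + θ • ((μ + θ⁻¹ • (x - μ)) - μ) = x := by
    intro x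
    rw [add_sub_cancel_left, smul_smul, mul_inv_cancel₀ hθ.ne', one_smul, add_sub_cancel]
  -- Step A : unfold qerr of dilated codebook via change of variables
  have stepA : qerr P s (dilate α θ μ)
      = ENNReal.ofReal θ ^ (s + d : ℝ) * ∫⁻ y, wd y * g y ^ s := by
    have e1 : ∀ x, ENNReal.ofReal (qdist x (dilate α θ μ)) ^ s
        = ENNReal.ofReal θ ^ s * g (μ + θ⁻¹ • (x - μ)) ^ s := by
      intro x
      rw [qdist_dilate hθ α hne x, ENNReal.ofReal_mul hθ.le,
        ENNReal.mul_rpow_of_nonneg _ _ hs.le]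
    have hmTg : Measurable fun x => g (μ + θ⁻¹ • (x - μ)) ^ s :=
      meas_rpow (hgm.comp (meas_dilmap θ⁻¹ μ)) s
    calc qerr P s (dilate α θ μ)
        = ∫⁻ x, ENNReal.ofReal θ ^ s * g (μ + θ⁻¹ • (x - μ)) ^ s ∂P := by
          unfold qerr; exact lintegral_congr fun x => e1 x
      _ = ENNReal.ofReal θ ^ s * ∫⁻ x, g (μ + θ⁻¹ • (x - μ)) ^ s ∂P :=
          lintegral_const_mul _ hmTg
      _ = ENNReal.ofReal θ ^ s * ∫⁻ x, (w x * g (μ + θ⁻¹ • (x - μ)) ^ s) ∂volume := by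
          rw [hPdef, lintegral_withDensity_eq_lintegral_mul _ hfm.ennreal_ofReal hmTg]; rfl
      _ = ENNReal.ofReal θ ^ s
            * ∫⁻ x, (fun y => wd y * g y ^ s) (μ + θ⁻¹ • (x - μ)) ∂volume := by
          congr 1
          refine lintegral_congr fun x => ?_
          simp only [hwd, fdil]
          rw [hST x]
      _ = ENNReal.ofReal θ ^ s * (ENNReal.ofReal ((θ⁻¹) ^ d)⁻¹ * ∫⁻ y, wd y * g y ^ s) := by
          rw [lintegral_comp_dilate (inv_pos.2 hθ) (fun y => wd y * g y ^ s) (hwdm.mul (meas_rpow hgm s))]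
      _ = ENNReal.ofReal θ ^ (s + d : ℝ) * ∫⁻ y, wd y * g y ^ s := by
          rw [← mul_assoc]
          congr 1
          rw [inv_pow, inv_inv, ENNReal.rpow_add s d (ENNReal.ofReal_pos.2 hθ).ne'
            ENNReal.ofReal_ne_top, ENNReal.rpow_natCast, ENNReal.ofReal_pow hθ.le]
  -- Step B : restrict the integral to {f > 0}
  have stepB : ∫⁻ y, wd y * g y ^ s
      = ∫⁻ y in {x | 0 < f x}, wd y * g y ^ s := by
    rw [← lintegral_indicator hU]
    refine lintegral_congr_ae ?_
    filter_upwards [hadm'] with y hy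
    by_cases h : 0 < f y
    · rw [Set.indicator_of_mem (show y ∈ {x | 0 < f x} from h)]
    · rw [Set.indicator_of_notMem (show y ∉ {x | 0 < f x} from h)]
      have h2 : ¬ 0 < f (μ + θ • (y - μ)) := fun hc => h (hy hc)
      have : wd y = 0 := by
        simp only [hwd, fdil]
        exact ENNReal.ofReal_eq_zero.2 (le_of_not_gt h2)
      rw [this, zero_mul]
  -- Step C : Hölder inequality on {f > 0}
  set ν := volume.restrict {x : EuclideanSpace ℝ (Fin d) | 0 < f x} with hν
  set F : EuclideanSpace ℝ (Fin d) → ℝ≥0∞ := fun y => g y ^ s * w y ^ (s / r) with hF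
  set G : EuclideanSpace ℝ (Fin d) → ℝ≥0∞ := fun y => wd y * w y ^ (-(s / r)) with hG
  have hFm : Measurable F := (meas_rpow hgm s).mul (meas_rpow hwm (s / r))
  have hGm : Measurable G := hwdm.mul (meas_rpow hwm (-(s / r)))
  have hpq : Real.HolderConjugate (r / s) (r / (r - s)) := by
    rw [Real.holderConjugate_iff]
    constructor
    · exact (one_lt_div hs).2 hsr
    · field_simp <;> ring
  have hFG : ∫⁻ y, wd y * g y ^ s ∂ν = ∫⁻ y, (F * G) y ∂ν := by
    refine lintegral_congr_ae ((ae_restrict_iff' hU).2 (ae_of_all _ fun y hy => ?_))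
    have hw0 : w y ≠ 0 := by simp [hw, ENNReal.ofReal_pos.2 hy, (ENNReal.ofReal_pos.2 hy).ne']
    have hwt : w y ≠ ⊤ := ENNReal.ofReal_ne_top
    have hcancel : w y ^ (s / r) * w y ^ (-(s / r)) = 1 := by
      rw [← ENNReal.rpow_add _ _ hw0 hwt]; simp
    have : (F * G) y = wd y * g y ^ s * (w y ^ (s / r) * w y ^ (-(s / r))) := by
      simp only [Pi.mul_apply, hF, hG]; ring
    rw [this, hcancel, mul_one]
  have hHolder := ENNReal.lintegral_mul_le_Lp_mul_Lq ν hpq hFm.aemeasurable hGm.aemeasurable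
  -- identify the two factors
  have hFp : ∫⁻ y, F y ^ (r / s) ∂ν = ∫⁻ y, g y ^ r * w y ∂ν := by
    refine lintegral_congr fun y => ?_
    rw [hF, ENNReal.mul_rpow_of_nonneg _ _ (by positivity : (0:ℝ) ≤ r / s),
      ← ENNReal.rpow_mul, ← ENNReal.rpow_mul]
    rw [show s * (r / s) = r by field_simp, show s / r * (r / s) = 1 by field_simp,
      ENNReal.rpow_one]
  have hGq : ∫⁻ y, G y ^ (r / (r - s)) ∂ν
      = ∫⁻ x in {x | 0 < f x},
          ENNReal.ofReal (fdil f θ μ x) ^ (r / (r - s)) *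
            ENNReal.ofReal (f x) ^ (-(s / (r - s))) := by
    refine lintegral_congr fun y => ?_
    rw [hG, ENNReal.mul_rpow_of_nonneg _ _ (le_of_lt (div_pos hr (sub_pos.2 hsr))),
      ← ENNReal.rpow_mul]
    rw [show -(s / r) * (r / (r - s)) = -(s / (r - s)) by field_simp]
  have hqerr_r : ∫⁻ y, g y ^ r * w y ∂volume = qerr P r α := by
    unfold qerr
    rw [hPdef, lintegral_withDensity_eq_lintegral_mul _ hfm.ennreal_ofReal (meas_rpow hgm r)]
    exact lintegral_congr fun y => mul_comm _ _
  have hexp1 : 1 / (r / s) = s / r := one_div_div r s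
  have hexp2 : 1 / (r / (r - s)) = 1 - s / r := by
    rw [one_div_div]; field_simp
  calc qerr P s (dilate α θ μ)
      = ENNReal.ofReal θ ^ (s + d : ℝ) * ∫⁻ y, (F * G) y ∂ν := by
        rw [stepA, stepB, hFG]
    _ ≤ ENNReal.ofReal θ ^ (s + d : ℝ) *
          ((∫⁻ y, F y ^ (r / s) ∂ν) ^ (1 / (r / s)) *
            (∫⁻ y, G y ^ (r / (r - s)) ∂ν) ^ (1 / (r / (r - s)))) :=
        mul_le_mul_right hHolder _
    _ ≤ ENNReal.ofReal θ ^ (s + d : ℝ) *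
          ((qerr P r α) ^ (s / r) *
            (∫⁻ x in {x | 0 < f x},
              ENNReal.ofReal (fdil f θ μ x) ^ (r / (r - s)) *
                ENNReal.ofReal (f x) ^ (-(s / (r - s)))) ^ (1 - s / r)) := by
        refine mul_le_mul_right (mul_le_mul' ?_ ?_) _
        · rw [hFp, hexp1, ← hqerr_r]
          exact ENNReal.rpow_le_rpow (setLIntegral_le_lintegral _ _) (by positivity)
        · rw [hGq, hexp2]
    _ = ENNReal.ofReal θ ^ (s + d : ℝ) *
          (qerr P r α) ^ (s / r) *
          (∫⁻ x in {x | 0 < f x},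
            ENNReal.ofReal (fdil f θ μ x) ^ (r / (r - s)) *
              ENNReal.ofReal (f x) ^ (-(s / (r - s)))) ^ (1 - s / r) := by
        rw [mul_assoc]

lemma cube_norm_le {d : ℕ} (hd : 1 ≤ d) {x : EuclideanSpace ℝ (Fin d)}
    (hx : x ∈ {x : EuclideanSpace ℝ (Fin d) | ∀ i, x i ∈ Icc (0:ℝ) 1}) : ‖x‖ ≤ (d : ℝ) := by
  rw [EuclideanSpace.norm_eq]
  have h2 : ∑ i, ‖x i‖ ^ 2 ≤ (d : ℝ) := by
    calc ∑ i, ‖x i‖ ^ 2 ≤ ∑ _i : Fin d, (1:ℝ) := by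
          refine Finset.sum_le_sum fun i _ => ?_
          have hxi := hx i
          have h3 : |x i| ≤ 1 := abs_le.2 ⟨by linarith [hxi.1], hxi.2⟩
          calc ‖x i‖ ^ 2 = |x i| ^ 2 := by rw [Real.norm_eq_abs]
            _ ≤ 1 ^ 2 := pow_le_pow_left₀ (abs_nonneg _) h3 2
            _ = 1 := one_pow 2
      _ = (d : ℝ) := by simp
  calc Real.sqrt (∑ i, ‖x i‖ ^ 2) ≤ Real.sqrt ((d:ℝ)) := Real.sqrt_le_sqrt h2
    _ ≤ Real.sqrt ((d:ℝ)^2) := by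
        apply Real.sqrt_le_sqrt
        have : (1:ℝ) ≤ (d:ℝ) := by exact_mod_cast hd
        nlinarith
    _ = (d:ℝ) := Real.sqrt_sq (by positivity)

lemma Jrd_lt_top {d : ℕ} (hd : 1 ≤ d) {r : ℝ} (hr : 0 < r) : Jrd r d < ⊤ := by
  have hq : qerr (unifCube d) r ({0} : Finset (EuclideanSpace ℝ (Fin d))) < ⊤ := by
    unfold qerr unifCube
    have hb : ∀ x ∈ {x : EuclideanSpace ℝ (Fin d) | ∀ i, x i ∈ Icc (0:ℝ) 1},
        ENNReal.ofReal (qdist x ({0} : Finset (EuclideanSpace ℝ (Fin d)))) ^ r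
          ≤ ENNReal.ofReal (d : ℝ) ^ r := by
      intro x hx
      refine ENNReal.rpow_le_rpow (ENNReal.ofReal_le_ofReal ?_) hr.le
      have h1 : qdist x ({0} : Finset (EuclideanSpace ℝ (Fin d))) = ‖x‖ := by
        unfold qdist
        rw [Finset.coe_singleton, Metric.infDist_singleton, dist_zero_right]
      rw [h1]
      exact cube_norm_le hd hx
    calc ∫⁻ x, ENNReal.ofReal (qdist x ({0} : Finset (EuclideanSpace ℝ (Fin d)))) ^ r
          ∂(volume.restrict {x : EuclideanSpace ℝ (Fin d) | ∀ i, x i ∈ Icc (0:ℝ) 1})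
        ≤ ∫⁻ _x in {x : EuclideanSpace ℝ (Fin d) | ∀ i, x i ∈ Icc (0:ℝ) 1},
            ENNReal.ofReal (d : ℝ) ^ r ∂volume := setLIntegral_mono (by measurability) hb
      _ = ENNReal.ofReal (d : ℝ) ^ r
            * volume {x : EuclideanSpace ℝ (Fin d) | ∀ i, x i ∈ Icc (0:ℝ) 1} := by
          rw [setLIntegral_const]
      _ < ⊤ := by
          apply ENNReal.mul_lt_top
          · exact ENNReal.rpow_lt_top_of_nonneg hr.le ENNReal.ofReal_ne_top
          · calc volume {x : EuclideanSpace ℝ (Fin d) | ∀ i, x i ∈ Icc (0:ℝ) 1}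
                ≤ volume (Metric.closedBall (0 : EuclideanSpace ℝ (Fin d)) d) := by
                  apply measure_mono
                  intro x hx
                  simpa only [Metric.mem_closedBall, dist_zero_right] using cube_norm_le hd hx
              _ < ⊤ := measure_closedBall_lt_top
  have h1 : Jrd r d ≤ (1 : ℝ≥0∞) ^ (r / (d:ℝ)) * enr (unifCube d) r 1 ^ r := by
    have := iInf_le (fun n : ℕ => ⨅ (_ : 1 ≤ n),
      (n : ℝ≥0∞) ^ (r / (d : ℝ)) * enr (unifCube d) r n ^ r) 1
    simpa [Jrd] using this
  have h2 : enr (unifCube d) r 1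
      ≤ qerr (unifCube d) r ({0} : Finset (EuclideanSpace ℝ (Fin d))) ^ (1 / r) := by
    unfold enr
    refine le_trans (iInf_le _ ({0} : Finset (EuclideanSpace ℝ (Fin d)))) ?_
    refine le_trans (iInf_le _ ⟨0, by simp⟩) ?_
    exact iInf_le _ (by simp)
  calc Jrd r d ≤ (1 : ℝ≥0∞) ^ (r / (d:ℝ)) * enr (unifCube d) r 1 ^ r := h1
    _ ≤ (1 : ℝ≥0∞) ^ (r / (d:ℝ))
        * (qerr (unifCube d) r ({0} : Finset (EuclideanSpace ℝ (Fin d))) ^ (1 / r)) ^ r :=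
        mul_le_mul_right (ENNReal.rpow_le_rpow h2 hr.le) _
    _ = qerr (unifCube d) r ({0} : Finset (EuclideanSpace ℝ (Fin d))) := by
        rw [ENNReal.one_rpow, one_mul, ← ENNReal.rpow_mul, one_div,
          inv_mul_cancel₀ hr.ne', ENNReal.rpow_one]
    _ < ⊤ := hq

lemma one_add_rpow_le {p t : ℝ} (hp : 0 ≤ p) (ht : 0 ≤ t) :
    (1 + t) ^ p ≤ 2 ^ p * (1 + t ^ p) := by
  have h1 : (1 + t) ≤ 2 * max 1 t := by
    rcases le_total t 1 with h | h
    · rw [max_eq_left h]; linarith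
    · rw [max_eq_right h]; linarith
  have hmax : (max 1 t) ^ p ≤ 1 + t ^ p := by
    rcases le_total t 1 with h | h
    · rw [max_eq_left h, Real.one_rpow]
      linarith [Real.rpow_nonneg ht p]
    · rw [max_eq_right h]
      linarith
  calc (1 + t) ^ p ≤ (2 * max 1 t) ^ p := Real.rpow_le_rpow (by positivity) h1 hp
    _ = 2 ^ p * (max 1 t) ^ p := Real.mul_rpow (by norm_num) (le_max_of_le_left zero_le_one)
    _ ≤ 2 ^ p * (1 + t ^ p) := mul_le_mul_of_nonneg_left hmax (by positivity)

lemma density_pow_lt_top {d : ℕ} (hd : 1 ≤ d) {r η : ℝ} (hr : 0 < r) (hη : 0 < η)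
    (f : EuclideanSpace ℝ (Fin d) → ℝ) (hf0 : ∀ x, 0 ≤ f x) (hfm : Measurable f)
    (hprob : IsProbabilityMeasure (volume.withDensity fun x => ENNReal.ofReal (f x)))
    (hmom : (∫⁻ x, ENNReal.ofReal ‖x‖ ^ (r + η)
      ∂(volume.withDensity fun x => ENNReal.ofReal (f x))) ≠ ⊤) :
    (∫⁻ x, ENNReal.ofReal (f x) ^ ((d : ℝ) / ((d : ℝ) + r))) < ⊤ := by
  have hd0 : (0:ℝ) < (d:ℝ) := by exact_mod_cast hd
  set a : ℝ := (d : ℝ) / ((d : ℝ) + r) with ha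
  have ha0 : 0 < a := by positivity
  set p := r + η with hp
  have hp0 : 0 < p := by positivity
  set W : EuclideanSpace ℝ (Fin d) → ℝ≥0∞ := fun x => ENNReal.ofReal ((1 + ‖x‖) ^ p) with hW
  have hWpos : ∀ x : EuclideanSpace ℝ (Fin d), (0:ℝ) < (1 + ‖x‖) ^ p := fun x => Real.rpow_pos_of_pos (show (0:ℝ) < 1 + ‖x‖ by linarith [norm_nonneg x]) p
  have hWm : Measurable W :=
    (show Measurable fun x : EuclideanSpace ℝ (Fin d) => (1 + ‖x‖) ^ p by
      fun_prop).ennreal_ofReal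
  set w : EuclideanSpace ℝ (Fin d) → ℝ≥0∞ := fun x => ENNReal.ofReal (f x) with hw
  have hwm : Measurable w := hfm.ennreal_ofReal
  have hpq : Real.HolderConjugate (((d:ℝ) + r) / d) (((d:ℝ) + r) / r) := by
    rw [Real.holderConjugate_iff]
    constructor
    · rw [lt_div_iff₀ hd0]; linarith
    · rw [inv_div, inv_div]
      field_simp
  set F : EuclideanSpace ℝ (Fin d) → ℝ≥0∞ := fun x => (w x * W x) ^ a with hF
  set G : EuclideanSpace ℝ (Fin d) → ℝ≥0∞ := fun x => W x ^ (-a) with hG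
  have hFm : Measurable F := ENNReal.continuous_rpow_const.measurable.comp (hwm.mul hWm)
  have hGm : Measurable G := ENNReal.continuous_rpow_const.measurable.comp hWm
  have hFG : ∀ x, w x ^ a = (F * G) x := by
    intro x
    have hW0 : W x ≠ 0 := (ENNReal.ofReal_pos.2 (hWpos x)).ne'
    have hWt : W x ≠ ⊤ := ENNReal.ofReal_ne_top
    have hcancel : W x ^ a * W x ^ (-a) = 1 := by
      rw [← ENNReal.rpow_add _ _ hW0 hWt]; simp
    simp only [Pi.mul_apply, hF, hG]
    rw [ENNReal.mul_rpow_of_nonneg _ _ ha0.le, mul_assoc, hcancel, mul_one]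
  have hHolder := ENNReal.lintegral_mul_le_Lp_mul_Lq
    (volume : Measure (EuclideanSpace ℝ (Fin d))) hpq hFm.aemeasurable hGm.aemeasurable
  -- the first factor
  have hFp : ∫⁻ x, F x ^ (((d:ℝ) + r) / d) = ∫⁻ x, w x * W x := by
    refine lintegral_congr fun x => ?_
    rw [hF, ← ENNReal.rpow_mul, show a * (((d:ℝ) + r) / d) = 1 by
      rw [ha]; field_simp, ENNReal.rpow_one]
  have hFfin : (∫⁻ x, w x * W x) < ⊤ := by
    have hmono : ∀ x, w x * W x
        ≤ w x * (ENNReal.ofReal (2 ^ p) * (1 + ENNReal.ofReal ‖x‖ ^ p)) := by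
      intro x
      refine mul_le_mul_right ?_ _
      calc W x ≤ ENNReal.ofReal (2 ^ p * (1 + ‖x‖ ^ p)) :=
            ENNReal.ofReal_le_ofReal (one_add_rpow_le hp0.le (norm_nonneg x))
        _ = ENNReal.ofReal (2 ^ p) * (1 + ENNReal.ofReal ‖x‖ ^ p) := by
            rw [ENNReal.ofReal_mul (by positivity), ENNReal.ofReal_add (by norm_num)
              (Real.rpow_nonneg (norm_nonneg x) p), ENNReal.ofReal_one,
              ENNReal.ofReal_rpow_of_nonneg (norm_nonneg x) hp0.le]
    have hg1 : Measurable fun x : EuclideanSpace ℝ (Fin d) => 1 + ENNReal.ofReal ‖x‖ ^ p := by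
      apply Measurable.const_add
      exact ENNReal.continuous_rpow_const.measurable.comp measurable_norm.ennreal_ofReal
    have hg2 : Measurable fun x : EuclideanSpace ℝ (Fin d) =>
        ENNReal.ofReal (2 ^ p) * (1 + ENNReal.ofReal ‖x‖ ^ p) := hg1.const_mul _
    calc ∫⁻ x, w x * W x ≤ ∫⁻ x, w x * (ENNReal.ofReal (2 ^ p) * (1 + ENNReal.ofReal ‖x‖ ^ p)) :=
          lintegral_mono hmono
      _ = ∫⁻ x, ENNReal.ofReal (2 ^ p) * (1 + ENNReal.ofReal ‖x‖ ^ p)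
            ∂(volume.withDensity fun x => ENNReal.ofReal (f x)) := by
          rw [lintegral_withDensity_eq_lintegral_mul volume hfm.ennreal_ofReal hg2]
          rfl
      _ = ENNReal.ofReal (2 ^ p) * ∫⁻ x, (1 + ENNReal.ofReal ‖x‖ ^ p)
            ∂(volume.withDensity fun x => ENNReal.ofReal (f x)) :=
          lintegral_const_mul _ hg1
      _ < ⊤ := by
          apply ENNReal.mul_lt_top ENNReal.ofReal_lt_top
          rw [lintegral_add_left measurable_const]
          apply ENNReal.add_lt_top.2
          constructor
          · simp [lintegral_const, measure_univ]
          · exact lt_top_iff_ne_top.2 hmom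
  -- the second factor
  have hGq : ∫⁻ x, G x ^ (((d:ℝ) + r) / r)
      = ∫⁻ x : EuclideanSpace ℝ (Fin d), ENNReal.ofReal ((1 + ‖x‖) ^ (-(p * ((d:ℝ)/r)))) := by
    refine lintegral_congr fun x => ?_
    rw [hG, ← ENNReal.rpow_mul,
      show -a * (((d:ℝ) + r) / r) = -((d:ℝ)/r) by rw [ha]; field_simp,
      ENNReal.ofReal_rpow_of_pos (by positivity), ← Real.rpow_mul (by positivity)]
    congr 2
    ring
  have hGfin : (∫⁻ x : EuclideanSpace ℝ (Fin d),
      ENNReal.ofReal ((1 + ‖x‖) ^ (-(p * ((d:ℝ)/r))))) < ⊤ := by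
    apply finite_integral_one_add_norm
    rw [finrank_euclideanSpace_fin]
    rw [hp]
    rw [show (r + η) * ((d:ℝ)/r) = (d:ℝ) * ((r + η)/r) by ring]
    have h2 : (1:ℝ) < (r + η) / r := (one_lt_div hr).2 (by linarith)
    nlinarith
  -- combine
  calc (∫⁻ x, ENNReal.ofReal (f x) ^ a) = ∫⁻ x, (F * G) x := lintegral_congr hFG
    _ ≤ (∫⁻ x, F x ^ (((d:ℝ) + r) / d)) ^ (1 / (((d:ℝ) + r) / d)) *
          (∫⁻ x, G x ^ (((d:ℝ) + r) / r)) ^ (1 / (((d:ℝ) + r) / r)) := hHolder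
    _ < ⊤ := by
        apply ENNReal.mul_lt_top
        · exact ENNReal.rpow_lt_top_of_nonneg (by positivity) (by rw [hFp]; exact hFfin.ne)
        · exact ENNReal.rpow_lt_top_of_nonneg (by positivity) (by rw [hGq]; exact hGfin.ne)

end Aux


/-- **Theorem 3.1, upper estimate, `s < r`.**
If `P = f·λ_d`, `(θ,μ)` is `P`-admissible, `E|X|^{r+η} < ∞`, `(α_n)` is
asymptotically `L^r(P)`-optimal and `∫_{f>0} f_{θ,μ}^{r/(r-s)} f^{-s/(r-s)} dλ_d < ∞`,
then `(α_n^{θ,μ})` is `L^s(P)`-rate-optimal and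
`limsup_n n^{s/d} ∫ d(x,α_n^{θ,μ})^s dP ≤ θ^{s+d} Q_r(P)^{s/r}
  (∫_{f>0} f_{θ,μ}^{r/(r-s)} f^{-s/(r-s)} dλ_d)^{1-s/r}`. -/
theorem stmt_1 {d : ℕ} (hd : 1 ≤ d) (r s : ℝ) (hr : 0 < r) (hs : 0 < s) (hsr : s < r)
    (f : EuclideanSpace ℝ (Fin d) → ℝ) (hf0 : ∀ x, 0 ≤ f x) (hfm : Measurable f)
    (P : Measure (EuclideanSpace ℝ (Fin d))) [IsProbabilityMeasure P]
    (hP : P = volume.withDensity fun x => ENNReal.ofReal (f x))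
    (θ : ℝ) (hθ : 0 < θ) (μ : EuclideanSpace ℝ (Fin d)) (hadm : Admissible f θ μ)
    (η : ℝ) (hη : 0 < η)
    (hmom : (∫⁻ x, ENNReal.ofReal ‖x‖ ^ (r + η) ∂P) ≠ ⊤)
    (α : ℕ → Finset (EuclideanSpace ℝ (Fin d))) (hα : AsympOptimalSeq P f r α)
    (hint : (∫⁻ x in {x | 0 < f x},
        ENNReal.ofReal (fdil f θ μ x) ^ (r / (r - s)) *
          ENNReal.ofReal (f x) ^ (-(s / (r - s)))) < ⊤) :
    RateOptimal P s (fun n => dilate (α n) θ μ) ∧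
    limsup (fun n : ℕ => (n : ℝ≥0∞) ^ (s / (d : ℝ)) * qerr P s (dilate (α n) θ μ)) atTop ≤
      ENNReal.ofReal θ ^ (s + d : ℝ) * Qr f r ^ (s / r) *
        (∫⁻ x in {x | 0 < f x},
          ENNReal.ofReal (fdil f θ μ x) ^ (r / (r - s)) *
            ENNReal.ofReal (f x) ^ (-(s / (r - s)))) ^ (1 - s / r) := by
  subst hP
  have hd0 : (d:ℝ) ≠ 0 := Nat.cast_ne_zero.2 (by omega)
  set P := volume.withDensity fun x => ENNReal.ofReal (f x) with hPdef
  set I := ∫⁻ x in {x | 0 < f x},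
      ENNReal.ofReal (fdil f θ μ x) ^ (r / (r - s)) *
        ENNReal.ofReal (f x) ^ (-(s / (r - s))) with hIdef
  -- transferred admissibility
  have hadm' : ∀ᵐ y ∂(volume : Measure (EuclideanSpace ℝ (Fin d))),
      0 < f (μ + θ • (y - μ)) → 0 < f y := by
    have hqmp : Measure.QuasiMeasurePreserving
        (fun y : EuclideanSpace ℝ (Fin d) => μ + θ • (y - μ)) volume volume :=
      ⟨meas_dilmap θ μ, by rw [map_dilate hθ.ne']; exact Measure.smul_absolutelyContinuous⟩
    filter_upwards [hqmp.ae hadm] with y hy hpos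
    have h2 := hy hpos
    rwa [add_sub_cancel_left, smul_smul, inv_mul_cancel₀ hθ.ne', one_smul,
      add_sub_cancel] at h2
  -- finiteness ingredients
  have hQne : Qr f r ≠ ⊤ := by
    unfold Qr
    exact (ENNReal.mul_lt_top (Jrd_lt_top hd hr)
      (ENNReal.rpow_lt_top_of_nonneg (by positivity)
        (density_pow_lt_top hd hr hη f hf0 hfm ‹_› hmom).ne)).ne
  have hIne : I ≠ ⊤ := hint.ne
  have hsr1 : s / r ≤ 1 := by
    rw [div_le_one hr]; exact hsr.le
  have hθne : ENNReal.ofReal θ ^ (s + d : ℝ) ≠ ⊤ :=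
    ENNReal.rpow_ne_top_of_nonneg (by positivity) ENNReal.ofReal_ne_top
  have hIpow : I ^ (1 - s / r) ≠ ⊤ :=
    ENNReal.rpow_ne_top_of_nonneg (by linarith) hIne
  -- pointwise bound for n ≥ 1
  have hbnd : ∀ n : ℕ, 1 ≤ n →
      (n : ℝ≥0∞) ^ (s / (d : ℝ)) * qerr P s (dilate (α n) θ μ)
        ≤ ENNReal.ofReal θ ^ (s + d : ℝ) *
            (((n : ℝ≥0∞) ^ (r / (d : ℝ)) * qerr P r (α n)) ^ (s / r)) * I ^ (1 - s / r) := by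
    intro n hn
    have h1 := key_bound r s hr hs hsr f hf0 hfm hθ hadm' (α n) (hα.1 n hn).1
    calc (n : ℝ≥0∞) ^ (s / (d : ℝ)) * qerr P s (dilate (α n) θ μ)
        ≤ (n : ℝ≥0∞) ^ (s / (d : ℝ)) *
            (ENNReal.ofReal θ ^ (s + d : ℝ) * qerr P r (α n) ^ (s / r) * I ^ (1 - s / r)) :=
          mul_le_mul_right h1 _
      _ = ENNReal.ofReal θ ^ (s + d : ℝ) *
            (((n : ℝ≥0∞) ^ (r / (d : ℝ)) * qerr P r (α n)) ^ (s / r)) * I ^ (1 - s / r) := by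
          rw [ENNReal.mul_rpow_of_nonneg _ _ (by positivity : (0:ℝ) ≤ s / r),
            ← ENNReal.rpow_mul,
            show r / (d : ℝ) * (s / r) = s / (d : ℝ) by field_simp]
          ring
  -- the limit of the majorant
  have hTend : Tendsto (fun n : ℕ => ENNReal.ofReal θ ^ (s + d : ℝ) *
        (((n : ℝ≥0∞) ^ (r / (d : ℝ)) * qerr P r (α n)) ^ (s / r)) * I ^ (1 - s / r)) atTop
      (𝓝 (ENNReal.ofReal θ ^ (s + d : ℝ) * Qr f r ^ (s / r) * I ^ (1 - s / r))) := by
    have h1 : Tendsto (fun n : ℕ => ((n : ℝ≥0∞) ^ (r / (d : ℝ)) * qerr P r (α n)) ^ (s / r))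
        atTop (𝓝 (Qr f r ^ (s / r))) :=
      (ENNReal.continuous_rpow_const.tendsto (Qr f r)).comp hα.2
    have h2 := ENNReal.Tendsto.const_mul h1 (Or.inr hθne)
    exact ENNReal.Tendsto.mul_const h2 (Or.inr hIpow)
  have hlimsup : limsup (fun n : ℕ => (n : ℝ≥0∞) ^ (s / (d : ℝ)) *
        qerr P s (dilate (α n) θ μ)) atTop
      ≤ ENNReal.ofReal θ ^ (s + d : ℝ) * Qr f r ^ (s / r) * I ^ (1 - s / r) := by
    refine le_trans (limsup_le_limsup (eventually_atTop.2 ⟨1, hbnd⟩)) ?_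
    exact hTend.limsup_eq.le
  refine ⟨lt_of_le_of_lt hlimsup ?_, hlimsup⟩
  exact ENNReal.mul_lt_top
    (ENNReal.mul_lt_top hθne.lt_top
      (ENNReal.rpow_lt_top_of_nonneg (by positivity) hQne))
    hIpow.lt_top
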